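/- Let $\mu$ be an absolutely continuous probability measure on $\mathbb{R}^n$ ($n \geq 2$) and let $c(x_1,x_2,x_3) = \sum_{1 \le i < j \le 3} \frac{1}{|x_i - x_j|}$ be the three-marginal Coulomb cost. Then the minimization of $\int c\, d\gamma$ over permutation-symmetric $\gamma \in \Pi(\mu,\mu,\mu)$ cannot be attained by a measure concentrated on the graph of a map $(T_2,T_3)$ over the first variable, unless the infimum is $+\infty$. -/

import Mathlib

open MeasureTheory
open scoped ENNReal

/-- The three-marginal Coulomb cost `∑_{1 ≤ i < j ≤ 3} 1/|x_i - x_j|`,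
with the convention `1/0 = ∞`. -/
noncomputable def coulomb3 (n : ℕ) (x : Fin 3 → EuclideanSpace ℝ (Fin n)) : ℝ≥0∞ :=
  ∑ p ∈ Finset.univ.filter (fun p : Fin 3 × Fin 3 => p.1 < p.2),
    (ENNReal.ofReal (dist (x p.1) (x p.2)))⁻¹

theorem stmt8 {n : ℕ} (hn : 2 ≤ n)
    (μ : Measure (EuclideanSpace ℝ (Fin n))) [IsProbabilityMeasure μ]
    (hac : μ ≪ volume)
    (T2 T3 : EuclideanSpace ℝ (Fin n) → EuclideanSpace ℝ (Fin n))
    (hT2 : Measurable T2) (hT3 : Measurable T3)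
    (γ : Measure (Fin 3 → EuclideanSpace ℝ (Fin n)))
    (hγ : γ = Measure.map (fun x => ![x, T2 x, T3 x]) μ)
    (hmarg : ∀ i, Measure.map (fun v => v i) γ = μ)
    (hsym : ∀ σ : Equiv.Perm (Fin 3), Measure.map (fun v i => v (σ i)) γ = γ)
    (hopt : ∀ γ' : Measure (Fin 3 → EuclideanSpace ℝ (Fin n)),
      (∀ i, Measure.map (fun v => v i) γ' = μ) →
      (∀ σ : Equiv.Perm (Fin 3), Measure.map (fun v i => v (σ i)) γ' = γ') →
      ∫⁻ v, coulomb3 n v ∂γ ≤ ∫⁻ v, coulomb3 n v ∂γ') :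
    ∫⁻ v, coulomb3 n v ∂γ = ∞ ∧
    sInf {e : ℝ≥0∞ | ∃ γ' : Measure (Fin 3 → EuclideanSpace ℝ (Fin n)),
      (∀ i, Measure.map (fun v => v i) γ' = μ) ∧
      (∀ σ : Equiv.Perm (Fin 3), Measure.map (fun v i => v (σ i)) γ' = γ') ∧
      e = ∫⁻ v, coulomb3 n v ∂γ'} = ∞ := by
  have hF : Measurable (fun x => (![x, T2 x, T3 x] : Fin 3 → EuclideanSpace ℝ (Fin n))) := by
    rw [measurable_pi_iff]
    intro i
    fin_cases i
    · simpa using measurable_id'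
    · simpa using hT2
    · simpa using hT3
  have hγprob : IsProbabilityMeasure γ := by
    rw [hγ]; exact Measure.isProbabilityMeasure_map hF.aemeasurable
  set A : Set (Fin 3 → EuclideanSpace ℝ (Fin n)) :=
    {v | v 1 = T2 (v 0) ∧ v 2 = T3 (v 0)} with hA
  have hAm : MeasurableSet A := by
    have h1 : MeasurableSet {v : Fin 3 → EuclideanSpace ℝ (Fin n) | v 1 = T2 (v 0)} :=
      measurableSet_eq_fun (measurable_pi_apply 1) (hT2.comp (measurable_pi_apply 0))
    have h2 : MeasurableSet {v : Fin 3 → EuclideanSpace ℝ (Fin n) | v 2 = T3 (v 0)} :=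
      measurableSet_eq_fun (measurable_pi_apply 2) (hT3.comp (measurable_pi_apply 0))
    exact h1.inter h2
  have hγA : ∀ᵐ v ∂γ, v ∈ A := by
    rw [hγ]
    refine (ae_map_iff hF.aemeasurable hAm).mpr ?_
    filter_upwards with x
    simp [hA]
  have hS : Measurable
      (fun (v : Fin 3 → EuclideanSpace ℝ (Fin n)) i => v (Equiv.swap (1:Fin 3) 2 i)) :=
    measurable_pi_iff.mpr fun i => measurable_pi_apply _
  have hγA' : ∀ᵐ v ∂γ, (fun i => v (Equiv.swap (1:Fin 3) 2 i)) ∈ A := by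
    refine (ae_map_iff hS.aemeasurable hAm).mp ?_
    rw [hsym (Equiv.swap 1 2)]
    exact hγA
  have key : ∀ᵐ v ∂γ, coulomb3 n v = ∞ := by
    filter_upwards [hγA, hγA'] with v h1 h2
    have e1 : v 1 = T2 (v 0) := h1.1
    have e2 : v 2 = T2 (v 0) := by
      have := h2.1
      simpa [show Equiv.swap (1:Fin 3) 2 1 = 2 from Equiv.swap_apply_left 1 2,
        show Equiv.swap (1:Fin 3) 2 0 = 0 from
          Equiv.swap_apply_of_ne_of_ne (by decide) (by decide)] using this
    have hv12 : v 1 = v 2 := by rw [e1, e2]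
    rw [coulomb3, ENNReal.sum_eq_top]
    refine ⟨((1:Fin 3), (2:Fin 3)), ?_, ?_⟩
    · simp
    · simp [hv12, ENNReal.inv_zero]
  have hmain : ∫⁻ v, coulomb3 n v ∂γ = ∞ := by
    calc ∫⁻ v, coulomb3 n v ∂γ = ∫⁻ _, ∞ ∂γ := lintegral_congr_ae key
      _ = ∞ := by simp
  refine ⟨hmain, le_antisymm (le_top) (le_sInf ?_)⟩
  rintro e ⟨γ', hmarg', hsym', rfl⟩
  exact le_trans (le_of_eq hmain.symm) (hopt γ' hmarg' hsym')
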